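/- Let a ∈ ℝ and let w ∈ ℂ be non-real with Re(w) < a < |w|, suppose φ := |Arg(w)| ∈ (π/2, π), and let S ∈ (0, φ) satisfy sin(2S − 2φ) = 2S. Then τ_c(a,w) > 1 if and only if one of the following holds: (i) a ≥ 0 and there exists θ ∈ (S, φ) such that θ·cot(θ − φ) = −a and |w|² < a² + θ²; (ii) −cos²(S − φ) < a < 0 and there exist θ₁ ∈ (0, S) and θ₂ ∈ (S, φ) such that θ₁·cot(θ₁ − φ) = −a, θ₂·cot(θ₂ − φ) = −a, and a² + θ₁² < |w|² < a² + θ₂². -/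

import Mathlib

open Real Set
set_option maxHeartbeats 1000000

noncomputable def Af (φ θ : ℝ) : ℝ := θ * (Real.cos (φ - θ) / Real.sin (φ - θ))

lemma cot_lt_cot' {x y : ℝ} (hx : 0 < x) (hxy : x < y) (hy : y < π) :
    Real.cot y < Real.cot x := by
  have hsx : 0 < Real.sin x := Real.sin_pos_of_pos_of_lt_pi hx (hxy.trans hy)
  have hsy : 0 < Real.sin y := Real.sin_pos_of_pos_of_lt_pi (hx.trans hxy) hy
  rw [Real.cot_eq_cos_div_sin, Real.cot_eq_cos_div_sin, div_lt_div_iff₀ hsy hsx]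
  have h : 0 < Real.sin (y - x) := Real.sin_pos_of_pos_of_lt_pi (by linarith) (by linarith)
  rw [Real.sin_sub] at h; nlinarith

lemma cos_lt_one_of_neg {y : ℝ} (h1 : -(2*π) < y) (h2 : y < 0) : Real.cos y < 1 := by
  have hs : Real.sin (y/2) < 0 := Real.sin_neg_of_neg_of_neg_pi_lt (by linarith) (by linarith)
  have h := Real.cos_two_mul (y/2)
  rw [show 2*(y/2) = y by ring] at h
  have h2' := Real.sin_sq_add_cos_sq (y/2)
  nlinarith

lemma Af_hasDerivAt (φ θ : ℝ) (h : Real.sin (φ - θ) ≠ 0) :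
    HasDerivAt (Af φ) ((2*θ - Real.sin (2*θ - 2*φ)) / (2 * Real.sin (φ - θ)^2)) θ := by
  have hin : HasDerivAt (fun x : ℝ => φ - x) (-1) θ := (hasDerivAt_id θ).const_sub φ
  have hc : HasDerivAt (fun x : ℝ => Real.cos (φ - x)) (Real.sin (φ - θ)) θ := by
    exact hin.cos.congr_deriv (by ring)
  have hs : HasDerivAt (fun x : ℝ => Real.sin (φ - x)) (-Real.cos (φ - θ)) θ := by
    exact hin.sin.congr_deriv (by ring)
  have hq := hc.div hs h
  have hm : HasDerivAt (Af φ) _ θ := (hasDerivAt_id θ).mul hq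
  convert hm using 1
  have h1 : Real.sin (2*θ - 2*φ) = -(2 * Real.sin (φ - θ) * Real.cos (φ - θ)) := by
    rw [show 2*θ - 2*φ = -(2*(φ - θ)) by ring, Real.sin_neg, Real.sin_two_mul]
  have h2 : Real.sin (φ-θ)^2 + Real.cos (φ-θ)^2 = 1 := Real.sin_sq_add_cos_sq _
  rw [h1]
  field_simp
  simp only [id_eq]
  linear_combination (-θ) * h2

lemma core (φ S a t : ℝ) (hφ1 : π/2 < φ) (hφ2 : φ < π)
    (hS1 : 0 < S) (hS2 : S < φ) (hSeq : Real.sin (2*S - 2*φ) = 2*S) (ht : 0 < t) :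
    (t < φ ∧ Af φ t < a) ↔
      ((0 ≤ a ∧ ∃ θ ∈ Set.Ioo S φ, Af φ θ = a ∧ t < θ) ∨
       (-Real.cos (S - φ)^2 < a ∧ a < 0 ∧
         ∃ θ₁ ∈ Set.Ioo (0:ℝ) S, ∃ θ₂ ∈ Set.Ioo S φ,
           Af φ θ₁ = a ∧ Af φ θ₂ = a ∧ θ₁ < t ∧ t < θ₂)) := by
  have hπ := Real.pi_pos
  -- S < φ - π/2
  have hSφ' : S < φ - π/2 := by
    by_contra hcon
    push_neg at hcon
    have h1 : 0 ≤ Real.sin (-(2*S - 2*φ)) :=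
      Real.sin_nonneg_of_nonneg_of_le_pi (by linarith) (by linarith)
    rw [Real.sin_neg] at h1
    linarith [hSeq, hS1]
  -- sin (φ - x) > 0 for x ∈ [0, φ)
  have hsin_pos : ∀ x : ℝ, 0 ≤ x → x < φ → 0 < Real.sin (φ - x) := by
    intro x h1 h2
    exact Real.sin_pos_of_pos_of_lt_pi (by linarith) (by linarith)
  -- continuity
  have hcont : ∀ s : Set ℝ, s ⊆ Set.Ico 0 φ → ContinuousOn (Af φ) s := by
    intro s hs
    apply ContinuousOn.mul continuousOn_id
    apply ContinuousOn.div
      ((Real.continuous_cos.comp (continuous_const.sub continuous_id)).continuousOn)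
      ((Real.continuous_sin.comp (continuous_const.sub continuous_id)).continuousOn)
    intro x hx
    exact (hsin_pos x (hs hx).1 (hs hx).2).ne'
  -- Af needs helper derivative (redeclare here since Af_hasDerivAt in other file)
  have hh : StrictMonoOn (fun x => 2*x - Real.sin (2*x - 2*φ)) (Set.Icc 0 φ) := by
    apply strictMonoOn_of_deriv_pos (convex_Icc 0 φ)
    · exact (by continuity : Continuous fun x : ℝ => 2*x - Real.sin (2*x - 2*φ)).continuousOn
    · intro x hx
      rw [interior_Icc] at hx
      have h1 : HasDerivAt (fun x : ℝ => 2*x - 2*φ) 2 x := by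
        simpa using ((hasDerivAt_id x).const_mul (2:ℝ)).sub_const (2*φ)
      have hd : HasDerivAt (fun x : ℝ => 2*x - Real.sin (2*x - 2*φ))
          (2 - Real.cos (2*x - 2*φ) * 2) x := by
        have h2 : HasDerivAt (fun x : ℝ => Real.sin (2*x - 2*φ)) (Real.cos (2*x - 2*φ) * 2) x :=
          h1.sin
        exact (((hasDerivAt_id' x).const_mul (2:ℝ)).sub h2).congr_deriv (by ring)
      rw [hd.deriv]
      have hc1 : Real.cos (2*x - 2*φ) < 1 := cos_lt_one_of_neg (by linarith [hx.1]) (by linarith [hx.2])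
      linarith
  have hfS : 2*S - Real.sin (2*S - 2*φ) = 0 := by rw [hSeq]; ring
  have hderiv : ∀ x : ℝ, 0 < x → x < φ →
      deriv (Af φ) x = (2*x - Real.sin (2*x - 2*φ)) / (2 * Real.sin (φ - x)^2) :=
    fun x h1 h2 => (Af_hasDerivAt φ x (hsin_pos x h1.le h2).ne').deriv
  have hanti : StrictAntiOn (Af φ) (Set.Icc 0 S) := by
    apply strictAntiOn_of_deriv_neg (convex_Icc 0 S)
      (hcont _ (fun x hx => ⟨hx.1, lt_of_le_of_lt hx.2 hS2⟩))
    intro x hx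
    rw [interior_Icc] at hx
    rw [hderiv x hx.1 (hx.2.trans hS2)]
    apply div_neg_of_neg_of_pos
    · have := hh ⟨hx.1.le, (hx.2.trans hS2).le⟩ ⟨hS1.le, hS2.le⟩ hx.2
      simp only at this
      linarith
    · exact mul_pos two_pos (pow_pos (hsin_pos x hx.1.le (hx.2.trans hS2)) 2)
  have hmono : StrictMonoOn (Af φ) (Set.Ico S φ) := by
    apply strictMonoOn_of_deriv_pos (convex_Ico S φ)
      (hcont _ (fun x hx => ⟨hS1.le.trans hx.1, hx.2⟩))
    intro x hx
    rw [interior_Ico] at hx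
    rw [hderiv x (hS1.trans hx.1) hx.2]
    apply div_pos
    · have := hh ⟨hS1.le, hS2.le⟩ ⟨(hS1.trans hx.1).le, hx.2.le⟩ hx.1
      simp only at this
      linarith
    · exact mul_pos two_pos (pow_pos (hsin_pos x (hS1.trans hx.1).le hx.2) 2)
  -- value at S
  have hsinφS : 0 < Real.sin (φ - S) := hsin_pos S hS1.le hS2
  have hAS : Af φ S = -Real.cos (S - φ)^2 := by
    have h1 : Real.sin (2*S - 2*φ) = -(2 * Real.sin (φ - S) * Real.cos (φ - S)) := by
      rw [show 2*S - 2*φ = -(2*(φ - S)) by ring, Real.sin_neg, Real.sin_two_mul]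
    rw [h1] at hSeq
    have hcc : Real.cos (S - φ) = Real.cos (φ - S) := by
      rw [show S - φ = -(φ - S) by ring, Real.cos_neg]
    rw [Af, hcc]
    field_simp
    nlinarith [hSeq]
  have hcosS : Real.cos (S - φ) < 0 := by
    rw [show S - φ = -(φ - S) by ring, Real.cos_neg]
    exact Real.cos_neg_of_pi_div_two_lt_of_lt (by linarith) (by linarith)
  have hAS0 : Af φ S < 0 := by rw [hAS]; nlinarith
  -- Af φ S is global min on (0, φ)
  have hge : ∀ x : ℝ, 0 < x → x < φ → Af φ S ≤ Af φ x := by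
    intro x hx1 hx2
    rcases le_or_gt x S with h | h
    · rcases eq_or_lt_of_le h with rfl | h'
      · exact le_refl _
      · exact (hanti ⟨hx1.le, h⟩ ⟨hS1.le, le_refl S⟩ h').le
    · exact (hmono ⟨le_refl S, hS2⟩ ⟨h.le, hx2⟩ h).le
  -- Af negative on (0, S]
  have hAneg : ∀ x : ℝ, 0 < x → x ≤ S → Af φ x < 0 := by
    intro x hx1 hx2
    have hc : Real.cos (φ - x) < 0 :=
      Real.cos_neg_of_pi_div_two_lt_of_lt (by linarith) (by linarith)
    have hs : 0 < Real.sin (φ - x) := hsin_pos x hx1.le (by linarith)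
    exact mul_neg_of_pos_of_neg hx1 (div_neg_of_neg_of_pos hc hs)
  -- upward root: for p ∈ [S, φ) with Af p < a, find root θ ∈ (p, φ)
  have hroot2 : ∀ p : ℝ, S ≤ p → p < φ → Af φ p < a →
      ∃ θ ∈ Set.Ioo S φ, Af φ θ = a ∧ p < θ := by
    intro p hp1 hp2 hpa
    set δ := min (min (φ - p) 1) (φ/(4*(|a|+1))) / 2 with hδdef
    have hφ0 : 0 < φ := by linarith
    have ha1 : (0:ℝ) < |a| + 1 := by positivity
    have hδ0 : 0 < δ := by
      apply div_pos _ two_pos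
      apply lt_min (lt_min (by linarith) one_pos)
      positivity
    have hδ1 : δ < φ - p := by
      have : min (min (φ - p) 1) (φ/(4*(|a|+1))) ≤ φ - p := le_trans (min_le_left _ _) (min_le_left _ _)
      rw [hδdef]; linarith
    have hδ2 : δ ≤ 1/2 := by
      have : min (min (φ - p) 1) (φ/(4*(|a|+1))) ≤ 1 := le_trans (min_le_left _ _) (min_le_right _ _)
      rw [hδdef]; linarith
    have hδ3 : δ < φ/(4*(|a|+1)) := by
      have h0 : (0:ℝ) < φ/(4*(|a|+1)) := by positivity
      have : min (min (φ - p) 1) (φ/(4*(|a|+1))) ≤ φ/(4*(|a|+1)) := min_le_right _ _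
      rw [hδdef]; linarith
    have hδφ2 : δ ≤ φ/2 := by
      have h1a : (1:ℝ) ≤ |a| + 1 := by linarith [abs_nonneg a]
      have : φ/(4*(|a|+1)) ≤ φ/4 := by
        apply div_le_div_of_nonneg_left hφ0.le (by norm_num) (by nlinarith)
      linarith
    set q := φ - δ with hqdef
    have hq1 : p < q := by rw [hqdef]; linarith
    have hq2 : q < φ := by rw [hqdef]; linarith
    have hAq : a < Af φ q := by
      have hδπ : δ < π/3 := by linarith [Real.pi_gt_three]
      have hcos : 1/2 < Real.cos δ := by
        have := Real.strictAntiOn_cos ⟨hδ0.le, by linarith⟩ ⟨by positivity, by linarith⟩ hδπ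
        rw [Real.cos_pi_div_three] at this
        exact this
      have hsin : Real.sin δ ≤ δ := Real.sin_le hδ0.le
      have hsin0 : 0 < Real.sin δ := Real.sin_pos_of_pos_of_lt_pi hδ0 (by linarith)
      have hq0 : φ/2 ≤ q := by rw [hqdef]; linarith
      have hkey : a * Real.sin δ < q * Real.cos δ := by
        have h1 : a * Real.sin δ ≤ |a| * δ := by
          have : a * Real.sin δ ≤ |a| * Real.sin δ :=
            mul_le_mul_of_nonneg_right (le_abs_self a) hsin0.le
          nlinarith [abs_nonneg a]
        have h2 : |a| * δ < φ/4 := by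
          have := (lt_div_iff₀ (by positivity : (0:ℝ) < 4*(|a|+1))).1 hδ3
          nlinarith [abs_nonneg a, hδ0]
        have h3 : φ/4 < q * Real.cos δ := by
          nlinarith [mul_lt_mul_of_pos_left hcos (show (0:ℝ) < q by linarith)]
        exact lt_of_le_of_lt h1 (h2.trans h3)
      have hfq : φ - q = δ := by rw [hqdef]; ring
      show a < q * (Real.cos (φ - q) / Real.sin (φ - q))
      rw [hfq, mul_div_assoc', lt_div_iff₀ hsin0]
      linarith [hkey]
    obtain ⟨θ, hθmem, hθa⟩ := intermediate_value_Icc hq1.le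
      (hcont _ (fun x hx => ⟨by linarith [hx.1, hS1], lt_of_le_of_lt hx.2 hq2⟩))
      ⟨hpa.le, hAq.le⟩
    have hθp : p < θ := lt_of_le_of_ne hθmem.1 (by rintro rfl; linarith [hθa, hpa])
    have hθq : θ < q := lt_of_le_of_ne hθmem.2 (by rintro rfl; linarith [hθa, hAq])
    exact ⟨θ, ⟨lt_of_le_of_lt hp1 hθp, hθq.trans hq2⟩, hθa, hθp⟩
  -- downward root near 0 (only needs a < 0): for p ∈ (0, S] with Af p < a
  have hroot1 : a < 0 → ∀ p : ℝ, 0 < p → p ≤ S → Af φ p < a →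
      ∃ θ₁ ∈ Set.Ioo (0:ℝ) S, Af φ θ₁ = a ∧ θ₁ < p := by
    intro ha p hp1 hp2 hpa
    have hsφ : 0 < Real.sin φ := Real.sin_pos_of_pos_of_lt_pi (by linarith) hφ2
    set u := min p ((-a) * Real.sin φ) / 2 with hudef
    have hu0 : 0 < u := by
      apply div_pos _ two_pos
      exact lt_min hp1 (mul_pos (neg_pos.2 ha) hsφ)
    have hup : u < p := by
      have : min p ((-a) * Real.sin φ) ≤ p := min_le_left _ _
      rw [hudef]; linarith
    have hub : u ≤ (-a) * Real.sin φ / 2 := by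
      have : min p ((-a) * Real.sin φ) ≤ (-a) * Real.sin φ := min_le_right _ _
      rw [hudef]; linarith
    have huS : u < S := hup.trans_le hp2
    have huφ : u < φ := by linarith
    have hua : a < Af φ u := by
      have h1 : 0 < Real.sin (φ - u) := hsin_pos u hu0.le huφ
      have h2 : Real.sin φ ≤ Real.sin (φ - u) := by
        rw [← Real.cos_sub_pi_div_two, ← Real.cos_sub_pi_div_two]
        exact Real.cos_le_cos_of_nonneg_of_le_pi (by linarith) (by linarith) (by linarith)
      have hcos : -1 ≤ Real.cos (φ - u) := Real.neg_one_le_cos _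
      have hkey : a * Real.sin (φ - u) < u * Real.cos (φ - u) := by
        have e1 : u * (-1) ≤ u * Real.cos (φ - u) := mul_le_mul_of_nonneg_left hcos hu0.le
        have e2 : a * Real.sin φ ≥ a * Real.sin (φ - u) := by nlinarith
        nlinarith [mul_pos (neg_pos.2 ha) h1]
      show a < u * (Real.cos (φ - u) / Real.sin (φ - u))
      rw [mul_div_assoc', lt_div_iff₀ h1]
      linarith [hkey]
    obtain ⟨θ₁, hθmem, hθa⟩ := intermediate_value_Icc' hup.le
      (hcont _ (fun x hx => ⟨le_trans hu0.le hx.1, by linarith [hx.2, hp2]⟩))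
      ⟨hpa.le, hua.le⟩
    have hθu : u < θ₁ := lt_of_le_of_ne hθmem.1 (by rintro rfl; linarith [hθa, hua])
    have hθp : θ₁ < p := lt_of_le_of_ne hθmem.2 (by rintro rfl; linarith [hθa, hpa])
    exact ⟨θ₁, ⟨hu0.trans hθu, hθp.trans_le hp2⟩, hθa, hθp⟩
  constructor
  · rintro ⟨htφ, hta⟩
    rcases le_or_gt 0 a with ha | ha
    · left
      refine ⟨ha, ?_⟩
      rcases le_or_gt t S with h | h
      · obtain ⟨θ, hθ, hθa, hθp⟩ := hroot2 S (le_refl S) hS2 (lt_of_lt_of_le hAS0 ha)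
        exact ⟨θ, hθ, hθa, lt_of_le_of_lt h hθp⟩
      · obtain ⟨θ, hθ, hθa, hθp⟩ := hroot2 t h.le htφ hta
        exact ⟨θ, hθ, hθa, hθp⟩
    · right
      have hge' : Af φ S ≤ Af φ t := hge t ht htφ
      refine ⟨by rw [← hAS]; linarith, ha, ?_⟩
      rcases le_or_gt t S with h | h
      · obtain ⟨θ₁, hθ₁, hθ₁a, hθ₁p⟩ := hroot1 ha t ht h hta
        obtain ⟨θ₂, hθ₂, hθ₂a, hθ₂p⟩ := hroot2 S (le_refl S) hS2 (by linarith)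
        exact ⟨θ₁, hθ₁, θ₂, hθ₂, hθ₁a, hθ₂a, hθ₁p, lt_of_le_of_lt h hθ₂p⟩
      · obtain ⟨θ₁, hθ₁, hθ₁a, hθ₁p⟩ := hroot1 ha S hS1 (le_refl S) (by linarith)
        obtain ⟨θ₂, hθ₂, hθ₂a, hθ₂p⟩ := hroot2 t h.le htφ hta
        exact ⟨θ₁, hθ₁, θ₂, hθ₂, hθ₁a, hθ₂a, hθ₁p.trans h, hθ₂p⟩
  · rintro (⟨ha, θ, hθ, hθa, htθ⟩ | ⟨ha1, ha2, θ₁, hθ₁, θ₂, hθ₂, hθ₁a, hθ₂a, h1t, ht2⟩)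
    · have htφ : t < φ := htθ.trans hθ.2
      refine ⟨htφ, ?_⟩
      rcases le_or_gt t S with h | h
      · exact lt_of_lt_of_le (hAneg t ht h) ha
      · have := hmono ⟨h.le, htφ⟩ ⟨hθ.1.le, hθ.2⟩ htθ
        rw [hθa] at this
        exact this
    · have htφ : t < φ := ht2.trans hθ₂.2
      refine ⟨htφ, ?_⟩
      rcases le_or_gt t S with h | h
      · have := hanti ⟨hθ₁.1.le, hθ₁.2.le⟩ ⟨ht.le, h⟩ h1t
        rw [hθ₁a] at this
        exact this
      · have := hmono ⟨h.le, htφ⟩ ⟨hθ₂.1.le, hθ₂.2⟩ ht2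
        rw [hθ₂a] at this
        exact this

/-- For real `a` and non-real `w` with `Re w < a < |w|`, `φ := |Arg w| ∈ (π/2, π)`, and
`S ∈ (0, φ)` with `sin(2S − 2φ) = 2S`, the critical delay exceeds `1` iff either
(i) `a ≥ 0` and there is `θ ∈ (S, φ)` with `θ cot(θ − φ) = −a` and `|w|² < a² + θ²`, or
(ii) `−cos²(S − φ) < a < 0` and there are `θ₁ ∈ (0, S)`, `θ₂ ∈ (S, φ)` with
`θ₁ cot(θ₁ − φ) = −a`, `θ₂ cot(θ₂ − φ) = −a`, and `a² + θ₁² < |w|² < a² + θ₂²`. -/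
theorem critical_delay_gt_one_large_arg (a : ℝ) (w : ℂ) (hw : w.im ≠ 0)
    (h₁ : w.re < a) (h₂ : a < ‖w‖)
    (hφ : |w.arg| ∈ Set.Ioo (Real.pi / 2) Real.pi)
    (S : ℝ) (hS : S ∈ Set.Ioo 0 |w.arg|)
    (hSeq : Real.sin (2 * S - 2 * |w.arg|) = 2 * S) :
    (|w.arg| - Real.arccos (a / ‖w‖)) /
        Real.sqrt ((‖w‖) ^ 2 - a ^ 2) > 1 ↔
      ((a ≥ 0 ∧ ∃ θ ∈ Set.Ioo S |w.arg|,
          θ * Real.cot (θ - |w.arg|) = -a ∧ (‖w‖) ^ 2 < a ^ 2 + θ ^ 2) ∨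
        (-Real.cos (S - |w.arg|) ^ 2 < a ∧ a < 0 ∧
          ∃ θ₁ ∈ Set.Ioo (0 : ℝ) S, ∃ θ₂ ∈ Set.Ioo S |w.arg|,
            θ₁ * Real.cot (θ₁ - |w.arg|) = -a ∧
            θ₂ * Real.cot (θ₂ - |w.arg|) = -a ∧
            a ^ 2 + θ₁ ^ 2 < (‖w‖) ^ 2 ∧
            (‖w‖) ^ 2 < a ^ 2 + θ₂ ^ 2)) := by
  obtain ⟨hφ1, hφ2⟩ := hφ
  obtain ⟨hS1, hS2⟩ := hS
  set φ := |w.arg| with hφdef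
  set r := ‖w‖ with hrdef
  have hπ := Real.pi_pos
  have hw0 : w ≠ 0 := fun h => hw (by simp [h])
  have hr0 : 0 < r := norm_pos_iff.2 hw0
  have hre : w.re = r * Real.cos φ := by
    have h1 := Complex.cos_arg hw0
    have hcos : Real.cos φ = Real.cos w.arg := by
      rw [hφdef]; rcases abs_choice w.arg with h | h <;> rw [h]
      rw [Real.cos_neg]
    rw [hcos, h1]; field_simp; rfl
  have hcosφ : Real.cos φ < 0 := Real.cos_neg_of_pi_div_two_lt_of_lt hφ1 (by linarith)
  have hcosφ' : -1 < Real.cos φ := by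
    have := Real.strictAntiOn_cos ⟨abs_nonneg w.arg, hφ2.le⟩ ⟨hπ.le, le_refl π⟩ hφ2
    rw [Real.cos_pi] at this
    exact this
  have har : -r < a := by nlinarith
  have hrt : 0 < r^2 - a^2 := by nlinarith
  set t := Real.sqrt (r^2 - a^2) with htdef
  have ht0 : 0 < t := Real.sqrt_pos.2 hrt
  have ht2 : t^2 = r^2 - a^2 := Real.sq_sqrt hrt.le
  set β := Real.arccos (a/r) with hβdef
  have har1 : -1 < a/r := by rw [lt_div_iff₀ hr0]; linarith
  have har2 : a/r < 1 := (div_lt_one hr0).2 h₂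
  have hβ1 : 0 < β := Real.arccos_pos.2 har2
  have hβ2 : β < π :=
    lt_of_le_of_ne (Real.arccos_le_pi _) (fun h => by
      have := Real.arccos_eq_pi.1 h; linarith [(div_le_iff₀ hr0).1 this])
  have hcosβ : Real.cos β = a/r := Real.cos_arccos har1.le har2.le
  have hsinβ : Real.sin β = t/r := by
    rw [hβdef, Real.sin_arccos,
      show 1 - (a/r)^2 = (t/r)^2 by rw [div_pow, div_pow, ht2]; field_simp,
      Real.sqrt_sq (by positivity)]
  have hcotβ : Real.cos β / Real.sin β = a / t := by
    have h1 := hr0.ne'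
    have h2 := ht0.ne'
    rw [hcosβ, hsinβ]
    field_simp
  have hL : ((φ - β) / t > 1) ↔ (t < φ ∧ Af φ t < a) := by
    rw [gt_iff_lt, lt_div_iff₀ ht0, one_mul]
    constructor
    · intro h
      have htφ : t < φ := by linarith
      refine ⟨htφ, ?_⟩
      have hc := cot_lt_cot' hβ1 (by linarith : β < φ - t) (by linarith)
      rw [Real.cot_eq_cos_div_sin, Real.cot_eq_cos_div_sin, hcotβ] at hc
      calc Af φ t = t * (Real.cos (φ - t) / Real.sin (φ - t)) := rfl
        _ < t * (a/t) := by exact (mul_lt_mul_iff_right₀ ht0).2 hc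
        _ = a := by field_simp
    · rintro ⟨htφ, hAa⟩
      by_contra hcon
      push_neg at hcon
      have h' : φ - t ≤ β := by linarith
      rcases eq_or_lt_of_le h' with he | hl
      · have : Af φ t = a := by
          show t * (Real.cos (φ - t) / Real.sin (φ - t)) = a
          rw [he, hcotβ]; field_simp
        linarith
      · have hc := cot_lt_cot' (by linarith : (0:ℝ) < φ - t) hl hβ2
        rw [Real.cot_eq_cos_div_sin, Real.cot_eq_cos_div_sin, hcotβ] at hc
        have : t * (a/t) < t * (Real.cos (φ - t) / Real.sin (φ - t)) :=
          (mul_lt_mul_iff_right₀ ht0).2 hc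
        rw [show t * (a/t) = a by field_simp] at this
        exact absurd hAa (not_lt.2 this.le)
  have hcore := core φ S a t hφ1 hφ2 hS1 hS2 (by rw [hφdef]; linarith [hSeq] ) ht0
  rw [hL, hcore]
  have hconv : ∀ θ : ℝ, (θ * Real.cot (θ - φ) = -a) ↔ Af φ θ = a := by
    intro θ
    have hcot : Real.cot (θ - φ) = -(Real.cos (φ - θ) / Real.sin (φ - θ)) := by
      rw [show θ - φ = -(φ - θ) by ring, Real.cot_eq_cos_div_sin, Real.cos_neg, Real.sin_neg,
        div_neg]
    rw [hcot]
    constructor <;> intro h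
    · show θ * (Real.cos (φ - θ) / Real.sin (φ - θ)) = a
      linarith
    · have h' : θ * (Real.cos (φ - θ) / Real.sin (φ - θ)) = a := h
      linarith
  have hsq : ∀ θ : ℝ, 0 < θ → ((t < θ) ↔ r^2 < a^2 + θ^2) := by
    intro θ hθ
    constructor <;> intro h <;> nlinarith [ht2, ht0]
  constructor
  · rintro (⟨ha, θ, hθ, hθa, htθ⟩ | ⟨h1, h2, θ₁, hθ₁, θ₂, hθ₂, ha1, ha2, hb1, hb2⟩)
    · exact Or.inl ⟨ha, θ, hθ, (hconv θ).2 hθa, (hsq θ (hS1.trans hθ.1)).1 htθ⟩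
    · exact Or.inr ⟨h1, h2, θ₁, hθ₁, θ₂, hθ₂, (hconv θ₁).2 ha1, (hconv θ₂).2 ha2,
        (by nlinarith [ht2, ht0, hθ₁.1] : a^2 + θ₁^2 < r^2),
        (hsq θ₂ (hS1.trans hθ₂.1)).1 hb2⟩
  · rintro (⟨ha, θ, hθ, hθa, htθ⟩ | ⟨h1, h2, θ₁, hθ₁, θ₂, hθ₂, ha1, ha2, hb1, hb2⟩)
    · exact Or.inl ⟨ha, θ, hθ, (hconv θ).1 hθa, (hsq θ (hS1.trans hθ.1)).2 htθ⟩
    · exact Or.inr ⟨h1, h2, θ₁, hθ₁, θ₂, hθ₂, (hconv θ₁).1 ha1, (hconv θ₂).1 ha2,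
        (by nlinarith [ht2, ht0, hθ₁.1] : θ₁ < t),
        (hsq θ₂ (hS1.trans hθ₂.1)).2 hb2⟩
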